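/- Let μ, y ∈ ℝ and let s > 0, β > 0, and set μ' = μ + s·(y − μ)/(s + β⁻¹) and s' = s·β⁻¹/(s + β⁻¹). Let 0 ≤ a < b < ∞ and let L : ℝ → ℝ be measurable with a ≤ L(f) ≤ b for all f. Then ∫ L dN(μ, s) − ∫ L dN(μ', s') ≤ (1/2)·β·s − (1/2)·log(1 + β·s) + (1/2)·(β·s/(s + β⁻¹))·(y − μ)² + 2·log((e^a + e^b)/2) − a − b. -/

import Mathlib

open MeasureTheory ProbabilityTheory Real
open scoped NNReal

lemma my_integrable_sq_mul_exp {b : ℝ} (hb : 0 < b) :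
    Integrable fun x : ℝ => x ^ 2 * Real.exp (-b * x ^ 2) := by
  have := integrable_rpow_mul_exp_neg_mul_sq hb (s := 2) (by norm_num)
  simpa [Real.rpow_natCast] using this

lemma my_integral_mul_exp {b : ℝ} (hb : 0 < b) :
    ∫ x : ℝ, x * Real.exp (-b * x ^ 2) = 0 := by
  have hderiv : ∀ x : ℝ, HasDerivAt (fun x : ℝ => -(2*b)⁻¹ * Real.exp (-b * x ^ 2))
      (x * Real.exp (-b * x ^ 2)) x := by
    intro x
    refine (((hasDerivAt_pow 2 x).const_mul (-b)).exp.const_mul (-(2*b)⁻¹)).congr_deriv ?_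
    field_simp
    ring
  exact integral_eq_zero_of_hasDerivAt_of_integrable hderiv
    (integrable_mul_exp_neg_mul_sq hb)
    ((integrable_exp_neg_mul_sq hb).const_mul _)

lemma my_integral_sq_mul_exp {b : ℝ} (hb : 0 < b) :
    ∫ x : ℝ, x ^ 2 * Real.exp (-b * x ^ 2) = Real.sqrt (π / b) / (2 * b) := by
  have hderiv : ∀ x : ℝ, HasDerivAt (fun x : ℝ => x * Real.exp (-b * x ^ 2))
      (Real.exp (-b * x ^ 2) - 2 * b * (x ^ 2 * Real.exp (-b * x ^ 2))) x := by
    intro x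
    have h1 : HasDerivAt (fun x : ℝ => Real.exp (-b * x ^ 2))
        (Real.exp (-b * x ^ 2) * (-b * (2 * x))) x := by
      convert ((hasDerivAt_pow 2 x).const_mul (-b)).exp using 1
      ring
    refine ((hasDerivAt_id x).mul h1).congr_deriv ?_
    simp [id]
    ring
  have hint : Integrable fun x : ℝ =>
      Real.exp (-b * x ^ 2) - 2 * b * (x ^ 2 * Real.exp (-b * x ^ 2)) :=
    (integrable_exp_neg_mul_sq hb).sub ((my_integrable_sq_mul_exp hb).const_mul _)
  have h0 := integral_eq_zero_of_hasDerivAt_of_integrable hderiv hint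
      (integrable_mul_exp_neg_mul_sq hb)
  rw [integral_sub (integrable_exp_neg_mul_sq hb)
      ((my_integrable_sq_mul_exp hb).const_mul _), integral_const_mul,
      integral_gaussian] at h0
  have hb' : (2 : ℝ) * b ≠ 0 := by positivity
  field_simp at h0 ⊢
  linarith

open MeasureTheory ProbabilityTheory Real
open scoped NNReal ENNReal

lemma my_gaussian_transfer (μ : ℝ) {v : ℝ≥0} (hv : v ≠ 0) (g : ℝ → ℝ) :
    ∫ x, g x ∂(gaussianReal μ v) = ∫ x, gaussianPDFReal μ v x * g x := by
  rw [gaussianReal_of_var_ne_zero μ hv]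
  have h : gaussianPDF μ v = fun x => ((gaussianPDFReal μ v x).toNNReal : ℝ≥0∞) := rfl
  rw [h, integral_withDensity_eq_integral_smul
    ((measurable_gaussianPDFReal μ v).real_toNNReal) g]
  congr 1 with x
  simp [NNReal.smul_def, Real.coe_toNNReal _ (gaussianPDFReal_nonneg μ v x)]

lemma my_gaussian_integrable_iff (μ : ℝ) {v : ℝ≥0} (hv : v ≠ 0) (g : ℝ → ℝ) :
    Integrable g (gaussianReal μ v) ↔
      Integrable (fun x => gaussianPDFReal μ v x * g x) volume := by
  rw [gaussianReal_of_var_ne_zero μ hv]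
  have h : gaussianPDF μ v = fun x => ((gaussianPDFReal μ v x).toNNReal : ℝ≥0∞) := rfl
  rw [h, integrable_withDensity_iff_integrable_smul
    ((measurable_gaussianPDFReal μ v).real_toNNReal)]
  constructor <;> intro hh <;> refine hh.congr (ae_of_all _ fun x => ?_) <;>
    simp [NNReal.smul_def, Real.coe_toNNReal _ (gaussianPDFReal_nonneg μ v x)]

lemma my_sqrt_pos {v : ℝ≥0} (hv : v ≠ 0) : 0 < Real.sqrt (2 * π * v) := by
  have : (0:ℝ) < v := by positivity
  positivity

lemma my_b_pos {v : ℝ≥0} (hv : v ≠ 0) : 0 < (2 * (v:ℝ))⁻¹ := by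
  have : (0:ℝ) < v := by positivity
  positivity

lemma my_pdf_eq (μ : ℝ) (v : ℝ≥0) (x : ℝ) :
    gaussianPDFReal μ v x
      = (Real.sqrt (2 * π * v))⁻¹ * Real.exp (-(2 * (v:ℝ))⁻¹ * (x - μ) ^ 2) := by
  rw [gaussianPDFReal]
  ring_nf

lemma my_integrable_sub_sq (μ : ℝ) {v : ℝ≥0} (hv : v ≠ 0) :
    Integrable (fun x => (x - μ) ^ 2) (gaussianReal μ v) := by
  rw [my_gaussian_integrable_iff μ hv]
  have h1 : Integrable (fun x : ℝ => (x - μ) ^ 2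
      * Real.exp (-(2 * (v:ℝ))⁻¹ * (x - μ) ^ 2)) volume := by
    have := (my_integrable_sq_mul_exp (my_b_pos hv)).comp_sub_right (g := μ)
    simpa using this
  refine (h1.const_mul ((Real.sqrt (2 * π * v))⁻¹)).congr (ae_of_all _ fun x => ?_)
  simp only [my_pdf_eq]; ring

lemma my_integrable_sub (μ : ℝ) {v : ℝ≥0} (hv : v ≠ 0) :
    Integrable (fun x => x - μ) (gaussianReal μ v) := by
  rw [my_gaussian_integrable_iff μ hv]
  have h1 : Integrable (fun x : ℝ => (x - μ)
      * Real.exp (-(2 * (v:ℝ))⁻¹ * (x - μ) ^ 2)) volume := by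
    have := (integrable_mul_exp_neg_mul_sq (my_b_pos hv)).comp_sub_right (g := μ)
    simpa using this
  refine (h1.const_mul ((Real.sqrt (2 * π * v))⁻¹)).congr (ae_of_all _ fun x => ?_)
  simp only [my_pdf_eq]; ring

lemma my_moment1 (μ : ℝ) {v : ℝ≥0} (hv : v ≠ 0) :
    ∫ x, (x - μ) ∂(gaussianReal μ v) = 0 := by
  rw [my_gaussian_transfer μ hv]
  calc ∫ x, gaussianPDFReal μ v x * (x - μ)
      = ∫ x, (Real.sqrt (2 * π * v))⁻¹
          * ((x - μ) * Real.exp (-(2 * (v:ℝ))⁻¹ * (x - μ) ^ 2)) := by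
        congr 1 with x; rw [my_pdf_eq]; ring
    _ = (Real.sqrt (2 * π * v))⁻¹
          * ∫ x, ((x - μ) * Real.exp (-(2 * (v:ℝ))⁻¹ * (x - μ) ^ 2)) := integral_const_mul _ _
    _ = 0 := by
        rw [integral_sub_right_eq_self
          (fun t => t * Real.exp (-(2 * (v:ℝ))⁻¹ * t ^ 2)) μ,
          my_integral_mul_exp (my_b_pos hv), mul_zero]

lemma my_moment2 (μ : ℝ) {v : ℝ≥0} (hv : v ≠ 0) :
    ∫ x, (x - μ) ^ 2 ∂(gaussianReal μ v) = v := by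
  rw [my_gaussian_transfer μ hv]
  have hvpos : (0:ℝ) < v := by positivity
  calc ∫ x, gaussianPDFReal μ v x * (x - μ) ^ 2
      = ∫ x, (Real.sqrt (2 * π * v))⁻¹
          * ((x - μ) ^ 2 * Real.exp (-(2 * (v:ℝ))⁻¹ * (x - μ) ^ 2)) := by
        congr 1 with x; rw [my_pdf_eq]; ring
    _ = (Real.sqrt (2 * π * v))⁻¹
          * ∫ x, ((x - μ) ^ 2 * Real.exp (-(2 * (v:ℝ))⁻¹ * (x - μ) ^ 2)) :=
        integral_const_mul _ _
    _ = (Real.sqrt (2 * π * v))⁻¹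
          * (Real.sqrt (π / (2 * (v:ℝ))⁻¹) / (2 * (2 * (v:ℝ))⁻¹)) := by
        rw [integral_sub_right_eq_self
          (fun t => t ^ 2 * Real.exp (-(2 * (v:ℝ))⁻¹ * t ^ 2)) μ,
          my_integral_sq_mul_exp (my_b_pos hv)]
    _ = v := by
        rw [show π / (2 * (v:ℝ))⁻¹ = 2 * π * v by field_simp]
        have h2 := my_sqrt_pos hv
        field_simp

lemma my_integrable_of_bounded {P : Measure ℝ} [IsProbabilityMeasure P] {g : ℝ → ℝ}
    (hm : AEStronglyMeasurable g P) {c C : ℝ} (h1 : ∀ x, c ≤ g x) (h2 : ∀ x, g x ≤ C) :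
    Integrable g P := by
  refine Integrable.mono' (integrable_const (max |c| |C|)) hm (ae_of_all _ fun x => ?_)
  rw [Real.norm_eq_abs]
  exact abs_le_max_abs_abs (h1 x) (h2 x)

lemma my_log_pdf (μ : ℝ) {v : ℝ≥0} (hv : v ≠ 0) (x : ℝ) :
    Real.log (gaussianPDFReal μ v x)
      = -Real.log (Real.sqrt (2 * π * v)) - (x - μ) ^ 2 / (2 * v) := by
  rw [gaussianPDFReal, Real.log_mul (inv_ne_zero (my_sqrt_pos hv).ne') (Real.exp_ne_zero _),
    Real.log_inv, Real.log_exp]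
  ring

lemma my_quad_integrable (μ : ℝ) {v : ℝ≥0} (hv : v ≠ 0) (A B C : ℝ) :
    Integrable (fun x => A + B * (x - μ) + C * (x - μ) ^ 2) (gaussianReal μ v) :=
  (((integrable_const A).add ((my_integrable_sub μ hv).const_mul B)).add
    ((my_integrable_sub_sq μ hv).const_mul C))

lemma my_quad_integral (μ : ℝ) {v : ℝ≥0} (hv : v ≠ 0) (A B C : ℝ) :
    ∫ x, (A + B * (x - μ) + C * (x - μ) ^ 2) ∂(gaussianReal μ v) = A + C * v := by
  have e1 : ∫ x, (A + B * (x - μ) + C * (x - μ) ^ 2) ∂(gaussianReal μ v)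
      = (∫ x, (A + B * (x - μ)) ∂(gaussianReal μ v))
        + ∫ x, C * (x - μ) ^ 2 ∂(gaussianReal μ v) :=
    integral_add ((integrable_const A).add ((my_integrable_sub μ hv).const_mul B))
      ((my_integrable_sub_sq μ hv).const_mul C)
  have e2 : ∫ x, (A + B * (x - μ)) ∂(gaussianReal μ v)
      = (∫ _, A ∂(gaussianReal μ v)) + ∫ x, B * (x - μ) ∂(gaussianReal μ v) :=
    integral_add (integrable_const A) ((my_integrable_sub μ hv).const_mul B)
  rw [e1, e2, integral_const_mul, integral_const_mul, my_moment1 μ hv, my_moment2 μ hv,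
    integral_const]
  simp

lemma my_DV (μ1 μ2 : ℝ) {v1 v2 : ℝ≥0} (h1 : v1 ≠ 0) (h2 : v2 ≠ 0)
    (L : ℝ → ℝ) (hL : Measurable L) (a b : ℝ) (hLa : ∀ f, a ≤ L f) (hLb : ∀ f, L f ≤ b)
    (K : ℝ → ℝ)
    (hK : ∀ x, K x = Real.log (gaussianPDFReal μ1 v1 x) - Real.log (gaussianPDFReal μ2 v2 x))
    (hKint : Integrable K (gaussianReal μ1 v1)) :
    ∫ f, L f ∂(gaussianReal μ1 v1) ≤ ∫ f, K f ∂(gaussianReal μ1 v1)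
      + Real.log (∫ f, Real.exp (L f) ∂(gaussianReal μ2 v2)) := by
  set P := gaussianReal μ1 v1 with hP
  set Q := gaussianReal μ2 v2 with hQ
  set p := gaussianPDFReal μ1 v1 with hp
  set q := gaussianPDFReal μ2 v2 with hq
  have hppos : ∀ x, 0 < p x := fun x => gaussianPDFReal_pos _ _ _ h1
  have hqpos : ∀ x, 0 < q x := fun x => gaussianPDFReal_pos _ _ _ h2
  set Z := ∫ f, Real.exp (L f) ∂Q with hZdef
  have hexpL_int : Integrable (fun f => Real.exp (L f)) Q :=
    my_integrable_of_bounded (hL.exp.aestronglyMeasurable)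
      (fun x => (Real.exp_le_exp.mpr (hLa x))) (fun x => Real.exp_le_exp.mpr (hLb x))
  have hZa : Real.exp a ≤ Z := by
    calc Real.exp a = ∫ _, Real.exp a ∂Q := by simp
    _ ≤ Z := integral_mono (integrable_const _) hexpL_int
        (fun x => Real.exp_le_exp.mpr (hLa x))
  have hZpos : 0 < Z := lt_of_lt_of_le (Real.exp_pos a) hZa
  have hZq : Z = ∫ x, q x * Real.exp (L x) := my_gaussian_transfer μ2 h2 _
  set g : ℝ → ℝ := fun x => Real.exp (L x) * q x / (Z * p x) with hg
  have hpg : ∀ x, p x * g x = Z⁻¹ * (q x * Real.exp (L x)) := by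
    intro x
    rw [hg]
    field_simp [(hppos x).ne']
  have hq_int : Integrable (fun x => Z⁻¹ * (q x * Real.exp (L x))) volume := by
    refine Integrable.mono' (((integrable_gaussianPDFReal μ2 v2).const_mul
        (Z⁻¹ * Real.exp b))) ?_ (ae_of_all _ fun x => ?_)
    · exact (((measurable_gaussianPDFReal μ2 v2).mul hL.exp).const_mul
        Z⁻¹).aestronglyMeasurable
    · have he := Real.exp_le_exp.mpr (hLb x)
      have hqx := (hqpos x).le
      have hZi : 0 < Z⁻¹ := inv_pos.mpr hZpos
      rw [Real.norm_eq_abs, abs_of_nonneg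
        (mul_nonneg hZi.le (mul_nonneg hqx (Real.exp_pos _).le))]
      calc Z⁻¹ * (q x * Real.exp (L x)) ≤ Z⁻¹ * (q x * Real.exp b) :=
            mul_le_mul_of_nonneg_left (mul_le_mul_of_nonneg_left he hqx) hZi.le
      _ = Z⁻¹ * Real.exp b * gaussianPDFReal μ2 v2 x := by rw [← hq]; ring
  have hg_int : Integrable g P := by
    rw [hP, my_gaussian_integrable_iff μ1 h1]
    exact hq_int.congr (ae_of_all _ fun x => (hpg x).symm)
  have hg_integral : ∫ x, g x ∂P = 1 := by
    rw [hP, my_gaussian_transfer μ1 h1]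
    calc ∫ x, p x * g x = ∫ x, Z⁻¹ * (q x * Real.exp (L x)) := by
          congr 1 with x; exact hpg x
    _ = Z⁻¹ * ∫ x, q x * Real.exp (L x) := integral_const_mul _ _
    _ = 1 := by rw [← hZq]; field_simp
  have hLint : Integrable L P :=
    my_integrable_of_bounded hL.aestronglyMeasurable hLa hLb
  have hpoint : ∀ x, L x - K x - Real.log Z ≤ g x - 1 := by
    intro x
    have hgpos : 0 < g x := by
      rw [hg]
      have h5 := hppos x; have h6 := hqpos x
      positivity
    have hlog : Real.log (g x) = L x - K x - Real.log Z := by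
      rw [hg]
      show Real.log (Real.exp (L x) * q x / (Z * p x)) = _
      rw [Real.log_div (mul_ne_zero (Real.exp_ne_zero _) (hqpos x).ne')
          (mul_ne_zero hZpos.ne' (hppos x).ne'),
        Real.log_mul (Real.exp_ne_zero _) (hqpos x).ne',
        Real.log_mul hZpos.ne' (hppos x).ne', Real.log_exp, hK x]
      ring
    have h7 := Real.log_le_sub_one_of_pos hgpos
    rw [hlog] at h7
    linarith
  have hmono : ∫ x, (L x - K x - Real.log Z) ∂P ≤ ∫ x, (g x - 1) ∂P :=
    integral_mono ((hLint.sub hKint).sub (integrable_const _))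
      (hg_int.sub (integrable_const _)) hpoint
  have e1 : ∫ x, (L x - K x - Real.log Z) ∂P
      = (∫ x, (L x - K x) ∂P) - ∫ _, Real.log Z ∂P :=
    integral_sub (hLint.sub hKint) (integrable_const _)
  have e2 : ∫ x, (L x - K x) ∂P = (∫ x, L x ∂P) - ∫ x, K x ∂P := integral_sub hLint hKint
  have e3 : ∫ x, (g x - 1) ∂P = (∫ x, g x ∂P) - ∫ _, (1:ℝ) ∂P :=
    integral_sub hg_int (integrable_const _)
  have e4 : ∫ _, Real.log Z ∂P = Real.log Z := by
    simp [integral_const, measure_univ]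
  have e5 : ∫ _, (1:ℝ) ∂P = 1 := by simp
  rw [e1, e2, e4] at hmono
  rw [e3, e5, hg_integral] at hmono
  linarith

lemma my_logZ_bound {Q : Measure ℝ} [IsProbabilityMeasure Q] (L : ℝ → ℝ) (hL : Measurable L)
    (a b : ℝ) (hLa : ∀ f, a ≤ L f) (hLb : ∀ f, L f ≤ b) :
    Real.log (∫ f, Real.exp (L f) ∂Q) - ∫ f, L f ∂Q
      ≤ 2 * Real.log ((Real.exp a + Real.exp b) / 2) - a - b := by
  set m := ∫ f, L f ∂Q with hm
  have hLint : Integrable L Q := my_integrable_of_bounded hL.aestronglyMeasurable hLa hLb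
  have hexpL_int : Integrable (fun f => Real.exp (L f)) Q :=
    my_integrable_of_bounded (hL.exp.aestronglyMeasurable)
      (fun x => (Real.exp_le_exp.mpr (hLa x))) (fun x => Real.exp_le_exp.mpr (hLb x))
  set Z := ∫ f, Real.exp (L f) ∂Q with hZ
  set S := Real.exp a + Real.exp b with hS
  have hZa : Real.exp a ≤ Z := by
    calc Real.exp a = ∫ _, Real.exp a ∂Q := by simp
    _ ≤ Z := integral_mono (integrable_const _) hexpL_int
        (fun x => Real.exp_le_exp.mpr (hLa x))
  have hZpos : 0 < Z := lt_of_lt_of_le (Real.exp_pos a) hZa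
  have hpoint : ∀ x, Real.exp (L x)
      ≤ (S - Real.exp (a + b - m) * (1 + m)) + Real.exp (a + b - m) * L x := by
    intro x
    have h1 : Real.exp (L x) + Real.exp (a + b - L x) ≤ S := by
      have e1 : Real.exp a ≤ Real.exp (L x) := Real.exp_le_exp.mpr (hLa x)
      have e2 : Real.exp (L x) ≤ Real.exp b := Real.exp_le_exp.mpr (hLb x)
      have e3 : Real.exp (a + b - L x) * Real.exp (L x) = Real.exp a * Real.exp b := by
        rw [← Real.exp_add, ← Real.exp_add]; ring_nf
      have e4 : 0 < Real.exp (L x) := Real.exp_pos _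
      nlinarith
    have h2 : Real.exp (a + b - m) * (1 + (m - L x)) ≤ Real.exp (a + b - L x) := by
      have h2a := Real.add_one_le_exp (m - L x)
      calc Real.exp (a + b - m) * (1 + (m - L x))
          ≤ Real.exp (a + b - m) * Real.exp (m - L x) := by
            have := Real.exp_pos (a + b - m); nlinarith
      _ = Real.exp (a + b - L x) := by rw [← Real.exp_add]; ring_nf
    nlinarith
  have hint_rhs : Integrable
      (fun x => (S - Real.exp (a + b - m) * (1 + m)) + Real.exp (a + b - m) * L x) Q :=
    (integrable_const _).add (hLint.const_mul _)
  have hZle : Z ≤ S - Real.exp (a + b - m) := by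
    calc Z ≤ ∫ x, ((S - Real.exp (a + b - m) * (1 + m)) + Real.exp (a + b - m) * L x) ∂Q :=
        integral_mono hexpL_int hint_rhs hpoint
    _ = (S - Real.exp (a + b - m) * (1 + m)) + Real.exp (a + b - m) * m := by
        rw [integral_add (integrable_const _) (hLint.const_mul _), integral_const_mul,
          integral_const]
        simp [← hm]
    _ = S - Real.exp (a + b - m) := by ring
  have hSpos : 0 < S := by positivity
  have hE1 : 0 < Real.exp (a + b - m) := Real.exp_pos _
  have h3 : S - Real.exp (a + b - m) ≤ Real.exp (2 * Real.log (S / 2) - a - b + m) := by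
    have hexpand : Real.exp (2 * Real.log (S / 2) - a - b + m)
        = (S / 2) ^ 2 * (Real.exp (a + b - m))⁻¹ := by
      rw [show 2 * Real.log (S / 2) - a - b + m
          = Real.log ((S / 2) ^ 2) + (-(a + b - m)) by
            rw [Real.log_pow]; push_cast; ring,
        Real.exp_add, Real.exp_log (by positivity), Real.exp_neg]
    rw [hexpand]
    have key : (S - Real.exp (a + b - m)) * Real.exp (a + b - m) ≤ (S / 2) ^ 2 := by
      nlinarith [sq_nonneg (S - 2 * Real.exp (a + b - m))]
    calc S - Real.exp (a + b - m)
        = (S - Real.exp (a + b - m)) * Real.exp (a + b - m) * (Real.exp (a + b - m))⁻¹ := by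
          field_simp
    _ ≤ (S / 2) ^ 2 * (Real.exp (a + b - m))⁻¹ := by
        apply mul_le_mul_of_nonneg_right key (by positivity)
  have h4 : Real.log Z ≤ 2 * Real.log (S / 2) - a - b + m := by
    calc Real.log Z ≤ Real.log (Real.exp (2 * Real.log (S / 2) - a - b + m)) :=
        Real.log_le_log hZpos (le_trans hZle h3)
    _ = _ := Real.log_exp _
  linarith

/-- **The paper's deterministic upper bound (Eq. (6)), combining Theorem 1 with Lemma 4
(supplementary).** For a Gaussian posterior `N(μ, s)` and its Bayes update `N(μ', s')` after
observing `y` with Gaussian noise precision `β`, where `μ' = μ + s (y − μ)/(s + β⁻¹)` and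
`s' = s β⁻¹/(s + β⁻¹)`, and any measurable loss `L` with values in `[a, b]`, `0 ≤ a < b`,
the reduction of the expected loss is bounded by the closed-form KL divergence plus
`C = 2 log((eᵃ + eᵇ)/2) − a − b`. -/
theorem expected_loss_diff_gaussian_bayes_update_le
    (μ y : ℝ) (s β : ℝ≥0) (hs : 0 < s) (hβ : 0 < β)
    (a b : ℝ) (ha : 0 ≤ a) (hab : a < b)
    (L : ℝ → ℝ) (hL : Measurable L) (hLa : ∀ f, a ≤ L f) (hLb : ∀ f, L f ≤ b) :
    ∫ f, L f ∂(gaussianReal μ s)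
        - ∫ f, L f ∂(gaussianReal (μ + (s : ℝ) * (y - μ) / ((s : ℝ) + (β : ℝ)⁻¹))
            (s * β⁻¹ / (s + β⁻¹))) ≤
      (1 / 2) * (β : ℝ) * (s : ℝ) - (1 / 2) * Real.log (1 + (β : ℝ) * (s : ℝ))
        + (1 / 2) * ((β : ℝ) * (s : ℝ) / ((s : ℝ) + (β : ℝ)⁻¹)) * (y - μ) ^ 2
        + 2 * Real.log ((Real.exp a + Real.exp b) / 2) - a - b := by
  have hsR : (0:ℝ) < s := NNReal.coe_pos.mpr hs
  have hβR : (0:ℝ) < β := NNReal.coe_pos.mpr hβ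
  have hβiR : (0:ℝ) < (β:ℝ)⁻¹ := inv_pos.mpr hβR
  have hsum : (0:ℝ) < (s:ℝ) + (β:ℝ)⁻¹ := by linarith
  set μ2 : ℝ := μ + (s : ℝ) * (y - μ) / ((s : ℝ) + (β : ℝ)⁻¹) with hμ2
  set v2 : ℝ≥0 := s * β⁻¹ / (s + β⁻¹) with hv2
  have hv2R : (v2 : ℝ) = (s:ℝ) * (β:ℝ)⁻¹ / ((s:ℝ) + (β:ℝ)⁻¹) := by
    rw [hv2]; push_cast; ring
  have hv2pos : (0:ℝ) < v2 := by rw [hv2R]; positivity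
  have hv2ne : v2 ≠ 0 := by
    intro h
    rw [h] at hv2pos
    simp at hv2pos
  have hsne : s ≠ 0 := hs.ne'
  set c0 : ℝ := Real.log (Real.sqrt (2*π*(v2:ℝ))) - Real.log (Real.sqrt (2*π*(s:ℝ)))
    + (μ2 - μ)^2 / (2*(v2:ℝ)) with hc0
  set c1 : ℝ := (μ - μ2) / (v2:ℝ) with hc1
  set c2 : ℝ := (2*(v2:ℝ))⁻¹ - (2*(s:ℝ))⁻¹ with hc2
  set K : ℝ → ℝ := fun x =>
    Real.log (gaussianPDFReal μ s x) - Real.log (gaussianPDFReal μ2 v2 x) with hKdef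
  have hKeq : ∀ x, K x = c0 + c1 * (x - μ) + c2 * (x - μ)^2 := by
    intro x
    rw [hKdef]
    show Real.log (gaussianPDFReal μ s x) - Real.log (gaussianPDFReal μ2 v2 x) = _
    rw [my_log_pdf μ hsne x, my_log_pdf μ2 hv2ne x, hc0, hc1, hc2]
    field_simp
    ring
  have hKint : Integrable K (gaussianReal μ s) :=
    (my_quad_integrable μ hsne c0 c1 c2).congr (ae_of_all _ fun x => (hKeq x).symm)
  have hKval : ∫ x, K x ∂(gaussianReal μ s) = c0 + c2 * (s:ℝ) := by
    rw [integral_congr_ae (ae_of_all _ hKeq), my_quad_integral μ hsne]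
  have hDV := my_DV μ μ2 hsne hv2ne L hL a b hLa hLb K (fun x => rfl) hKint
  have hC := my_logZ_bound (Q := gaussianReal μ2 v2) L hL a b hLa hLb
  have hll : Real.log (Real.sqrt (2*π*(v2:ℝ))) - Real.log (Real.sqrt (2*π*(s:ℝ)))
      = -(1/2) * Real.log (1 + (β:ℝ)*(s:ℝ)) := by
    rw [Real.log_sqrt (by positivity), Real.log_sqrt (by positivity)]
    have hr : (2*π*(s:ℝ)) / (2*π*(v2:ℝ)) = 1 + (β:ℝ)*(s:ℝ) := by
      rw [hv2R]; field_simp; ring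
    have hld : Real.log (2*π*(s:ℝ)) - Real.log (2*π*(v2:ℝ))
        = Real.log (1 + (β:ℝ)*(s:ℝ)) := by
      rw [← Real.log_div (by positivity) (by positivity), hr]
    linarith
  have hμd : μ2 - μ = (s:ℝ)*(y-μ)/((s:ℝ)+(β:ℝ)⁻¹) := by rw [hμ2]; ring
  have harith : (μ2 - μ)^2/(2*(v2:ℝ)) + ((2*(v2:ℝ))⁻¹ - (2*(s:ℝ))⁻¹)*(s:ℝ)
      = (1/2)*(β:ℝ)*(s:ℝ)
        + (1/2)*(((β:ℝ)*(s:ℝ))/((s:ℝ)+(β:ℝ)⁻¹))*(y-μ)^2 := by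
    rw [hμd, hv2R]
    field_simp
    ring
  have hkey : c0 + c2 * (s:ℝ)
      = (1/2)*(β:ℝ)*(s:ℝ) - (1/2) * Real.log (1 + (β:ℝ)*(s:ℝ))
        + (1/2)*(((β:ℝ)*(s:ℝ))/((s:ℝ)+(β:ℝ)⁻¹))*(y-μ)^2 := by
    rw [hc0, hc2]
    linarith
  have t1 : ∫ (f : ℝ), K f ∂gaussianReal μ s = c0 + c2 * (s:ℝ) := hKval
  have t2 := hDV.trans (by rw [t1, hkey] :
    ∫ (f : ℝ), K f ∂gaussianReal μ s + Real.log (∫ (f : ℝ), rexp (L f) ∂gaussianReal μ2 v2)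
      ≤ (1/2)*(β:ℝ)*(s:ℝ) - (1/2) * Real.log (1 + (β:ℝ)*(s:ℝ))
        + (1/2)*(((β:ℝ)*(s:ℝ))/((s:ℝ)+(β:ℝ)⁻¹))*(y-μ)^2
        + Real.log (∫ (f : ℝ), rexp (L f) ∂gaussianReal μ2 v2))
  linarith [t2, hC]
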